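/- For real numbers a, b > 0 and c1, c2 with a + b > |c1 - c2|, the function E(r) = (ωa/2)[a cosh²(r) + b sinh²(r)] + (ωb/2)[b cosh²(r) + a sinh²(r)] + ((ωa+ωb)/4)[(c1 - c2) sinh(2r) - 1], with ωa, ωb > 0, attains its unique global minimum at r = -(1/2) artanh((c1 - c2)/(a + b)). -/
import Mathlib


/-- The real inverse hyperbolic tangent, `artanh x = (1/2) * log ((1+x)/(1-x))`. -/
noncomputable def artanh (x : ℝ) : ℝ := 1 / 2 * Real.log ((1 + x) / (1 - x))

/-- Energy after two-mode squeezing with parameter `r`. -/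
noncomputable def tmsEnergy (ωa ωb a b c₁ c₂ r : ℝ) : ℝ :=
  ωa / 2 * (a * Real.cosh r ^ 2 + b * Real.sinh r ^ 2)
    + ωb / 2 * (b * Real.cosh r ^ 2 + a * Real.sinh r ^ 2)
    + (ωa + ωb) / 4 * ((c₁ - c₂) * Real.sinh (2 * r) - 1)

lemma exp_artanh (x : ℝ) (hx : |x| < 1) :
    Real.exp (artanh x) = Real.sqrt ((1 + x) / (1 - x)) := by
  have h1 : 0 < 1 - x := by cases' abs_lt.mp hx with h h'; linarith
  have h2 : 0 < 1 + x := by cases' abs_lt.mp hx with h h'; linarith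
  have hy : 0 < (1 + x) / (1 - x) := div_pos h2 h1
  rw [artanh, Real.sqrt_eq_rpow, Real.rpow_def_of_pos hy]
  ring_nf

lemma sqrt_mul_cosh_artanh (x : ℝ) (hx : |x| < 1) :
    Real.sqrt (1 - x ^ 2) * Real.cosh (artanh x) = 1 := by
  have h1 : 0 < 1 - x := by cases' abs_lt.mp hx with h h'; linarith
  have h2 : 0 < 1 + x := by cases' abs_lt.mp hx with h h'; linarith
  have hp : Real.sqrt (1 + x) ^ 2 = 1 + x := Real.sq_sqrt h2.le
  have hq : Real.sqrt (1 - x) ^ 2 = 1 - x := Real.sq_sqrt h1.le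
  have hp0 : 0 < Real.sqrt (1 + x) := Real.sqrt_pos.mpr h2
  have hq0 : 0 < Real.sqrt (1 - x) := Real.sqrt_pos.mpr h1
  have hs : Real.sqrt (1 - x ^ 2) = Real.sqrt (1 + x) * Real.sqrt (1 - x) := by
    rw [← Real.sqrt_mul h2.le]; ring_nf
  have he : Real.exp (artanh x) = Real.sqrt (1 + x) / Real.sqrt (1 - x) := by
    rw [exp_artanh x hx, Real.sqrt_div h2.le]
  rw [Real.cosh_eq, hs, he, Real.exp_neg, he]
  field_simp
  nlinarith [hp, hq, hp0, hq0]

lemma sqrt_mul_sinh_artanh (x : ℝ) (hx : |x| < 1) :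
    Real.sqrt (1 - x ^ 2) * Real.sinh (artanh x) = x := by
  have h1 : 0 < 1 - x := by cases' abs_lt.mp hx with h h'; linarith
  have h2 : 0 < 1 + x := by cases' abs_lt.mp hx with h h'; linarith
  have hp : Real.sqrt (1 + x) ^ 2 = 1 + x := Real.sq_sqrt h2.le
  have hq : Real.sqrt (1 - x) ^ 2 = 1 - x := Real.sq_sqrt h1.le
  have hp0 : 0 < Real.sqrt (1 + x) := Real.sqrt_pos.mpr h2
  have hq0 : 0 < Real.sqrt (1 - x) := Real.sqrt_pos.mpr h1
  have hs : Real.sqrt (1 - x ^ 2) = Real.sqrt (1 + x) * Real.sqrt (1 - x) := by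
    rw [← Real.sqrt_mul h2.le]; ring_nf
  have he : Real.exp (artanh x) = Real.sqrt (1 + x) / Real.sqrt (1 - x) := by
    rw [exp_artanh x hx, Real.sqrt_div h2.le]
  rw [Real.sinh_eq, hs, he, Real.exp_neg, he]
  field_simp
  nlinarith [hp, hq, hp0, hq0]

lemma cosh_eq_one (y : ℝ) (h : Real.cosh y = 1) : y = 0 := by
  have h2 : Real.cosh (2 * (y / 2)) = Real.cosh (y / 2) ^ 2 + Real.sinh (y / 2) ^ 2 :=
    Real.cosh_two_mul _
  have h3 : Real.cosh (y / 2) ^ 2 = Real.sinh (y / 2) ^ 2 + 1 := Real.cosh_sq _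
  have hy : (2 : ℝ) * (y / 2) = y := by ring
  rw [hy, h] at h2
  have h4 : Real.sinh (y / 2) = 0 := by nlinarith
  have := Real.sinh_eq_zero.mp h4
  linarith

/-- The two-mode squeezing energy attains its unique global minimum at
`r = -(1/2) * artanh ((c₁ - c₂)/(a + b))`. -/
theorem tmsEnergy_unique_global_min (ωa ωb a b c₁ c₂ : ℝ)
    (hωa : 0 < ωa) (hωb : 0 < ωb) (ha : 0 < a) (hb : 0 < b)
    (hc : |c₁ - c₂| < a + b) :
    ∀ r : ℝ,
      tmsEnergy ωa ωb a b c₁ c₂ (-(1 / 2) * artanh ((c₁ - c₂) / (a + b)))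
        ≤ tmsEnergy ωa ωb a b c₁ c₂ r ∧
      (tmsEnergy ωa ωb a b c₁ c₂ r =
        tmsEnergy ωa ωb a b c₁ c₂ (-(1 / 2) * artanh ((c₁ - c₂) / (a + b)))
        → r = -(1 / 2) * artanh ((c₁ - c₂) / (a + b))) := by
  have hs : 0 < a + b := by positivity
  have hx : |(c₁ - c₂) / (a + b)| < 1 := by
    rw [abs_div, abs_of_pos hs, div_lt_one hs]; exact hc
  obtain ⟨x, hxdef⟩ : ∃ x : ℝ, (c₁ - c₂) / (a + b) = x := ⟨_, rfl⟩
  rw [hxdef] at hx ⊢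
  have hcx : c₁ - c₂ = (a + b) * x := by
    rw [← hxdef]; field_simp
  set u := artanh x with hudef
  have hk : 0 < Real.sqrt (1 - x ^ 2) := by
    apply Real.sqrt_pos.mpr
    rcases abs_lt.mp hx with ⟨h, h'⟩; nlinarith
  set k := Real.sqrt (1 - x ^ 2) with hkdef
  have hku : k * Real.cosh u = 1 := sqrt_mul_cosh_artanh x hx
  have hks : k * Real.sinh u = x := sqrt_mul_sinh_artanh x hx
  have key : ∀ t : ℝ, (a + b) * Real.cosh t + (c₁ - c₂) * Real.sinh t =
      (a + b) * k * Real.cosh (t + u) := by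
    intro t
    rw [Real.cosh_add]
    linear_combination (-((a + b) * Real.cosh t)) * hku + (-((a + b) * Real.sinh t)) * hks
      + Real.sinh t * hcx
  have energy_eq : ∀ r : ℝ, tmsEnergy ωa ωb a b c₁ c₂ r =
      (ωa + ωb) / 4 * ((a + b) * Real.cosh (2 * r) + (c₁ - c₂) * Real.sinh (2 * r))
        + (ωa * (a - b) + ωb * (b - a)) / 4 - (ωa + ωb) / 4 := by
    intro r
    have h1 : Real.cosh (2 * r) = Real.cosh r ^ 2 + Real.sinh r ^ 2 := Real.cosh_two_mul r
    have h2 : Real.cosh r ^ 2 = Real.sinh r ^ 2 + 1 := Real.cosh_sq r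
    rw [tmsEnergy]
    linear_combination (-(ωa + ωb) * (a + b) / 4) * h1
      + ((ωa * (a - b) + ωb * (b - a)) / 4) * h2
  intro r
  set r₀ : ℝ := -(1 / 2) * u with hr0
  have hru : 2 * r₀ + u = 0 := by rw [hr0]; ring
  have hdiff : tmsEnergy ωa ωb a b c₁ c₂ r - tmsEnergy ωa ωb a b c₁ c₂ r₀ =
      (ωa + ωb) / 4 * ((a + b) * k) * (Real.cosh (2 * r + u) - 1) := by
    rw [energy_eq r, energy_eq r₀, key (2 * r), key (2 * r₀), hru, Real.cosh_zero]
    ring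
  have hpos : 0 < (ωa + ωb) / 4 * ((a + b) * k) := by positivity
  have hge : 1 ≤ Real.cosh (2 * r + u) := Real.one_le_cosh _
  constructor
  · nlinarith [hdiff, hpos, hge]
  · intro heq
    have h0 : (ωa + ωb) / 4 * ((a + b) * k) * (Real.cosh (2 * r + u) - 1) = 0 := by
      rw [← hdiff, heq]; ring
    have h1 : Real.cosh (2 * r + u) = 1 := by
      rcases mul_eq_zero.mp h0 with h | h
      · exact absurd h (ne_of_gt hpos)
      · linarith
    have := cosh_eq_one _ h1
    rw [hr0]; linarith
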